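/- For every parameter h ∈ (0,1) and every x ∈ [0,1], the sequence of Takagi approximants T_h^n(x) of the lifted Bernoulli shift map converges as n → ∞, the series Σ_{k=0}^{∞} 2^{−k} ( t_h(M̃_h^k(x)) − (1/2) t_h(M̃_h^k(h)) ) converges absolutely, and lim_{n→∞} T_h^n(x) = Σ_{k=0}^{∞} 2^{−k} ( t_h(M̃_h^k(x)) − (1/2) t_h(M̃_h^k(h)) ). -/

import Mathlib

open Filter

/-- The lifted Bernoulli shift map `M_h`. -/
noncomputable def bernM (h x : ℝ) : ℝ :=
  if Int.fract x < 1/2 then (⌊x⌋ : ℝ) + 2 * Int.fract x + h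
  else (⌊x⌋ : ℝ) + 2 * Int.fract x - 1 - h

/-- The mod-1 reduced lifted Bernoulli shift map `M̃_h`. -/
noncomputable def bernMt (h x : ℝ) : ℝ := Int.fract (bernM h x)

/-- The Takagi approximant `T_h^n(x) = ∫_0^x (⌊M_h^{n+1}(y)⌋ - ⌊y⌋) dy`. -/
noncomputable def bernTak (h : ℝ) (n : ℕ) (x : ℝ) : ℝ :=
  ∫ y in (0:ℝ)..x, ((⌊(bernM h)^[n+1] y⌋ : ℝ) - (⌊y⌋ : ℝ))

/-- The piecewise linear function `t_h` for `h ∈ (0,1)`. -/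
noncomputable def tFun (h x : ℝ) : ℝ :=
  if x < (1-h)/2 then 0
  else if x < 1/2 then x - (1-h)/2
  else if x < (1+h)/2 then (1+h)/2 - x
  else 0

noncomputable def bernS (h u : ℝ) : ℝ := (⌊bernM h u⌋ : ℝ) - (⌊u⌋ : ℝ)


lemma bernM_meas (h : ℝ) : Measurable (bernM h) := by
  unfold bernM
  have hfl : Measurable (fun u : ℝ => (⌊u⌋ : ℝ)) :=
    Measurable.comp (g := fun n : ℤ => (n : ℝ)) Measurable.of_discrete Int.measurable_floor
  refine Measurable.ite (measurableSet_lt measurable_fract measurable_const) ?_ ?_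
  · exact ((hfl.add ((measurable_fract.const_mul 2))).add measurable_const)
  · exact (((hfl.add ((measurable_fract.const_mul 2))).sub measurable_const).sub measurable_const)

lemma bernMt_meas (h : ℝ) : Measurable (bernMt h) :=
  measurable_fract.comp (bernM_meas h)

lemma bernS_meas (h : ℝ) : Measurable (bernS h) := by
  have hfl : Measurable (fun u : ℝ => (⌊u⌋ : ℝ)) :=
    Measurable.comp (g := fun n : ℤ => (n : ℝ)) Measurable.of_discrete Int.measurable_floor
  exact (hfl.comp (bernM_meas h)).sub hfl

lemma bernM_fract (h u : ℝ) : bernM h (Int.fract u) = bernM h u - (⌊u⌋ : ℝ) := by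
  unfold bernM
  rw [Int.fract_fract, Int.floor_fract]
  split_ifs <;> push_cast <;> ring

lemma bernMt_fract (h u : ℝ) : bernMt h (Int.fract u) = bernMt h u := by
  unfold bernMt
  rw [bernM_fract]
  exact Int.fract_sub_intCast _ _

lemma bernS_fract (h u : ℝ) : bernS h (Int.fract u) = bernS h u := by
  unfold bernS
  rw [bernM_fract, Int.floor_fract]
  have : bernM h u - (⌊u⌋ : ℝ) = bernM h u + ((-⌊u⌋ : ℤ) : ℝ) := by push_cast; ring
  rw [this, Int.floor_add_intCast]
  push_cast; ring

lemma bernMt_iter_fract (h : ℝ) (k : ℕ) (u : ℝ) :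
    (bernMt h)^[k+1] u = Int.fract ((bernM h)^[k+1] u) := by
  induction k with
  | zero => rfl
  | succ k ih =>
    rw [Function.iterate_succ_apply', ih, ← bernMt_fract, Int.fract_fract, bernMt_fract,
      Function.iterate_succ_apply' (bernM h) (k+1) u]
    rfl

lemma fract_bernMt (h u : ℝ) : Int.fract (bernMt h u) = bernMt h u := Int.fract_fract _

lemma bernMt_iter_fract_eq (h : ℝ) (k : ℕ) (u : ℝ) (hu : 0 ≤ u) (hu1 : u < 1) :
    Int.fract ((bernMt h)^[k] u) = (bernMt h)^[k] u := by
  cases k with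
  | zero => exact Int.fract_eq_self.2 ⟨hu, hu1⟩
  | succ k => rw [Function.iterate_succ_apply']; exact fract_bernMt h _

lemma sum_bernS (h : ℝ) (n : ℕ) (y : ℝ) :
    ((⌊(bernM h)^[n+1] y⌋ : ℝ) - (⌊y⌋ : ℝ)) =
      ∑ k ∈ Finset.range (n+1), bernS h ((bernMt h)^[k] y) := by
  induction n with
  | zero => simp [bernS]
  | succ n ih =>
    rw [Finset.sum_range_succ, ← ih, bernMt_iter_fract, bernS_fract h ((bernM h)^[n+1] y)]
    unfold bernS
    rw [Function.iterate_succ_apply' (bernM h) (n+1) y]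
    ring

lemma tFun_nonneg (h u : ℝ) (h0 : 0 < h) : 0 ≤ tFun h u := by
  unfold tFun; split_ifs <;> linarith

lemma tFun_le (h u : ℝ) (h0 : 0 < h) : tFun h u ≤ h/2 := by
  unfold tFun; split_ifs <;> linarith

lemma tFun_symm (h u : ℝ) : tFun h (1 - u) = tFun h u := by
  unfold tFun; split_ifs <;> linarith

lemma tFun_one (h : ℝ) (h1 : h < 1) : tFun h 1 = 0 := by
  unfold tFun; split_ifs <;> linarith

lemma tFun_zero (h : ℝ) (h1 : h < 1) : tFun h 0 = 0 := by
  unfold tFun; split_ifs <;> linarith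

lemma fract_neg_fract (u : ℝ) : Int.fract (-(Int.fract u)) = Int.fract (-u) := by
  rw [show -Int.fract u = -u + ((⌊u⌋:ℤ):ℝ) by rw [← Int.self_sub_floor u]; ring,
    Int.fract_add_intCast]

section vals
variable {h : ℝ} (h0 : 0 < h) (h1 : h < 1)
include h0 h1

lemma bernM_lo (y : ℝ) (hy0 : 0 ≤ y) (hy : y < 1/2) : bernM h y = 2*y + h := by
  have hf : Int.fract y = y := Int.fract_eq_self.2 ⟨hy0, by linarith⟩
  have hfl : ⌊y⌋ = 0 := Int.floor_eq_zero_iff.2 ⟨hy0, by linarith⟩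
  unfold bernM; rw [hf, hfl, if_pos hy]; push_cast; ring

lemma bernM_hi (y : ℝ) (hy0 : 1/2 ≤ y) (hy : y < 1) : bernM h y = 2*y - 1 - h := by
  have hf : Int.fract y = y := Int.fract_eq_self.2 ⟨by linarith, hy⟩
  have hfl : ⌊y⌋ = 0 := Int.floor_eq_zero_iff.2 ⟨by linarith, hy⟩
  unfold bernM; rw [hf, hfl, if_neg (not_lt.2 hy0)]; push_cast; ring

lemma bernMt_1 (y : ℝ) (hy0 : 0 ≤ y) (hy : y < (1-h)/2) : bernMt h y = 2*y + h := by
  unfold bernMt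
  rw [bernM_lo h0 h1 y hy0 (by linarith)]
  exact Int.fract_eq_self.2 ⟨by linarith, by linarith⟩

lemma bernMt_2 (y : ℝ) (hy0 : (1-h)/2 ≤ y) (hy : y < 1/2) : bernMt h y = 2*y + h - 1 := by
  unfold bernMt
  rw [bernM_lo h0 h1 y (by linarith) hy]
  have e : Int.fract (2*y + h) = Int.fract (2*y + h - 1) := by
    rw [show (2*y + h - 1 : ℝ) = 2*y + h - ((1:ℤ):ℝ) by push_cast; ring, Int.fract_sub_intCast]
  rw [e]
  exact Int.fract_eq_self.2 ⟨by linarith, by linarith⟩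

lemma bernMt_3 (y : ℝ) (hy0 : 1/2 ≤ y) (hy : y < (1+h)/2) : bernMt h y = 2*y - h := by
  unfold bernMt
  rw [bernM_hi h0 h1 y hy0 (by linarith)]
  have e : Int.fract (2*y - 1 - h) = Int.fract (2*y - h) := by
    rw [show (2*y - 1 - h : ℝ) = 2*y - h - ((1:ℤ):ℝ) by push_cast; ring, Int.fract_sub_intCast]
  rw [e]
  exact Int.fract_eq_self.2 ⟨by linarith, by linarith⟩

lemma bernMt_4 (y : ℝ) (hy0 : (1+h)/2 ≤ y) (hy : y < 1) : bernMt h y = 2*y - 1 - h := by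
  unfold bernMt
  rw [bernM_hi h0 h1 y (by linarith) hy]
  exact Int.fract_eq_self.2 ⟨by linarith, by linarith⟩

lemma bernMt_zero : bernMt h 0 = h := by
  unfold bernMt
  rw [bernM_lo h0 h1 0 le_rfl (by norm_num)]
  norm_num
  exact ⟨h0.le, h1⟩

lemma bernMt_one : bernMt h 1 = h := by
  unfold bernMt bernM
  rw [Int.fract_one, if_pos (by norm_num), Int.floor_one]
  rw [show ((1:ℤ):ℝ) + 2*0 + h = h + ((1:ℤ):ℝ) by push_cast; ring, Int.fract_add_intCast]
  exact Int.fract_eq_self.2 ⟨h0.le, h1⟩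

lemma bernS_1 (y : ℝ) (hy0 : 0 ≤ y) (hy : y < (1-h)/2) : bernS h y = 0 := by
  unfold bernS
  rw [bernM_lo h0 h1 y hy0 (by linarith),
    show ⌊(2*y+h : ℝ)⌋ = 0 from Int.floor_eq_zero_iff.2 ⟨by linarith, by linarith⟩,
    show ⌊(y : ℝ)⌋ = 0 from Int.floor_eq_zero_iff.2 ⟨by linarith, by linarith⟩]
  norm_num

lemma bernS_2 (y : ℝ) (hy0 : (1-h)/2 ≤ y) (hy : y < 1/2) : bernS h y = 1 := by
  unfold bernS
  rw [bernM_lo h0 h1 y (by linarith) hy,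
    show ⌊(2*y+h : ℝ)⌋ = 1 from Int.floor_eq_iff.2 (by constructor <;> push_cast <;> linarith),
    show ⌊(y : ℝ)⌋ = 0 from Int.floor_eq_zero_iff.2 ⟨by linarith, by linarith⟩]
  norm_num

lemma bernS_3 (y : ℝ) (hy0 : 1/2 ≤ y) (hy : y < (1+h)/2) : bernS h y = -1 := by
  unfold bernS
  rw [bernM_hi h0 h1 y hy0 (by linarith),
    show ⌊(2*y-1-h : ℝ)⌋ = -1 from Int.floor_eq_iff.2 (by constructor <;> push_cast <;> linarith),
    show ⌊(y : ℝ)⌋ = 0 from Int.floor_eq_zero_iff.2 ⟨by linarith, by linarith⟩]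
  norm_num

lemma bernS_4 (y : ℝ) (hy0 : (1+h)/2 ≤ y) (hy : y < 1) : bernS h y = 0 := by
  unfold bernS
  rw [bernM_hi h0 h1 y (by linarith) hy,
    show ⌊(2*y-1-h : ℝ)⌋ = 0 from Int.floor_eq_zero_iff.2 ⟨by linarith, by linarith⟩,
    show ⌊(y : ℝ)⌋ = 0 from Int.floor_eq_zero_iff.2 ⟨by linarith, by linarith⟩]
  norm_num

lemma bernS_bound (u : ℝ) : |bernS h u| ≤ 1 := by
  rw [← bernS_fract]
  set v := Int.fract u with hv
  have hv0 : 0 ≤ v := Int.fract_nonneg u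
  have hv1 : v < 1 := Int.fract_lt_one u
  rcases lt_or_ge v ((1-h)/2) with c1 | c1
  · rw [bernS_1 h0 h1 v hv0 c1]; norm_num
  rcases lt_or_ge v (1/2) with c2 | c2
  · rw [bernS_2 h0 h1 v c1 c2]; norm_num
  rcases lt_or_ge v ((1+h)/2) with c3 | c3
  · rw [bernS_3 h0 h1 v c2 c3]; norm_num
  · rw [bernS_4 h0 h1 v c3 hv1]; norm_num

lemma bernMt_periodic (u : ℝ) : bernMt h (Int.fract u) = bernMt h u := bernMt_fract h u

lemma fract_neg_of_ne (u : ℝ) (hu : Int.fract u ≠ 0) : Int.fract (-u) = 1 - Int.fract u :=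
  Int.fract_neg hu

lemma bernMt_reflect (a : ℝ) :
    bernMt h (Int.fract (-a)) = Int.fract (-(bernMt h a)) ∨
      bernMt h (Int.fract (-a)) = bernMt h a := by
  -- reduce to v := fract a
  have key : ∀ v : ℝ, 0 ≤ v → v < 1 →
      bernMt h (Int.fract (-v)) = Int.fract (-(bernMt h v)) ∨
        bernMt h (Int.fract (-v)) = bernMt h v := by
    intro v hv0 hv1
    have hfv : Int.fract v = v := Int.fract_eq_self.2 ⟨hv0, hv1⟩
    rcases eq_or_lt_of_le hv0 with hz | hpos
    · -- v = 0
      right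
      rw [← hz]
      norm_num
    rcases lt_trichotomy v (1/2) with hlt | heq | hgt
    · -- 0 < v < 1/2 : fract (-v) = 1 - v ∈ (1/2, 1)
      left
      have hneg : Int.fract (-v) = 1 - v := by
        rw [Int.fract_neg (by rw [hfv]; exact ne_of_gt hpos), hfv]
      rw [hneg]
      have e1 : bernMt h (1 - v) = Int.fract (1 - 2*v - h) := by
        unfold bernMt
        rw [bernM_hi h0 h1 (1 - v) (by linarith) (by linarith)]
        ring_nf
      have e2 : bernMt h v = Int.fract (2*v + h) := by
        unfold bernMt
        rw [bernM_lo h0 h1 v hv0 hlt]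
      rw [e1, e2, fract_neg_fract,
        show (1 - 2*v - h : ℝ) = -(2*v+h) + ((1:ℤ):ℝ) by push_cast; ring, Int.fract_add_intCast]
    · -- v = 1/2
      right
      have hneg : Int.fract (-v) = 1 - v := by
        rw [Int.fract_neg (by rw [hfv]; exact ne_of_gt hpos), hfv]
      rw [hneg]
      subst heq
      norm_num
    · -- 1/2 < v < 1 : fract (-v) = 1 - v ∈ (0, 1/2)
      left
      have hneg : Int.fract (-v) = 1 - v := by
        rw [Int.fract_neg (by rw [hfv]; positivity), hfv]
      rw [hneg]
      have e1 : bernMt h (1 - v) = Int.fract (2 - 2*v + h) := by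
        unfold bernMt
        rw [bernM_lo h0 h1 (1 - v) (by linarith) (by linarith)]
        ring_nf
      have e2 : bernMt h v = Int.fract (2*v - 1 - h) := by
        unfold bernMt
        rw [bernM_hi h0 h1 v hgt.le hv1]
      rw [e1, e2, fract_neg_fract,
        show (2 - 2*v + h : ℝ) = -(2*v-1-h) + ((1:ℤ):ℝ) by push_cast; ring, Int.fract_add_intCast]
  have h1' := key (Int.fract a) (Int.fract_nonneg a) (Int.fract_lt_one a)
  rw [fract_neg_fract, bernMt_fract h a] at h1'
  exact h1'

lemma bernMt_iter_reflect (k : ℕ) : ∀ a : ℝ,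
    (bernMt h)^[k] (Int.fract (-a)) = Int.fract (-((bernMt h)^[k] a)) ∨
      (bernMt h)^[k] (Int.fract (-a)) = Int.fract ((bernMt h)^[k] a) := by
  induction k with
  | zero => intro a; exact Or.inl rfl
  | succ k ih =>
    intro a
    rw [Function.iterate_succ_apply, Function.iterate_succ_apply]
    rcases bernMt_reflect h0 h1 a with hA | hB
    · rw [hA]
      exact ih (bernMt h a)
    · rw [hB]
      right
      exact (bernMt_iter_fract_eq h k (bernMt h a) (Int.fract_nonneg _) (Int.fract_lt_one _)).symm

lemma tFun_iter_symm (k : ℕ) : tFun h ((bernMt h)^[k] (1 - h)) = tFun h ((bernMt h)^[k] h) := by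
  have hf : Int.fract (-h) = 1 - h := by
    rw [Int.fract_neg (by rw [Int.fract_eq_self.2 ⟨h0.le, h1⟩]; exact ne_of_gt h0),
      Int.fract_eq_self.2 ⟨h0.le, h1⟩]
  have hiter : Int.fract ((bernMt h)^[k] h) = (bernMt h)^[k] h :=
    bernMt_iter_fract_eq h k h h0.le h1
  rcases bernMt_iter_reflect h0 h1 k h with hA | hB
  · rw [hf] at hA
    rw [hA]
    set u := (bernMt h)^[k] h with hu
    have hu0 : 0 ≤ u := by rw [← hiter]; exact Int.fract_nonneg _
    have hu1 : u < 1 := by rw [← hiter]; exact Int.fract_lt_one _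
    rcases eq_or_lt_of_le hu0 with hz | hpos
    · rw [← hz]; norm_num
    · rw [Int.fract_neg (by rw [hiter]; exact ne_of_gt hpos), hiter, tFun_symm]
  · rw [hf] at hB
    rw [hB, hiter]

lemma tFun_iter_one (k : ℕ) : tFun h ((bernMt h)^[k] 1) = tFun h ((bernMt h)^[k] 0) := by
  cases k with
  | zero => simp [tFun_one h h1, tFun_zero h h1]
  | succ k =>
    rw [Function.iterate_succ_apply, Function.iterate_succ_apply,
      bernMt_one h0 h1, bernMt_zero h0 h1]

end vals


open MeasureTheory intervalIntegral in
lemma intervalIntegrable_of_bounded {g : ℝ → ℝ} (hm : Measurable g)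
    (hb : ∀ y, |g y| ≤ 1) (a b : ℝ) : IntervalIntegrable g volume a b := by
  refine IntervalIntegrable.mono_fun' (g := fun _ => (1:ℝ)) (intervalIntegrable_const)
    hm.aestronglyMeasurable ?_
  filter_upwards with y
  simpa using hb y

open MeasureTheory in
lemma intervalIntegral_congr_Ioo {f g : ℝ → ℝ} {a b : ℝ} (hab : a ≤ b)
    (hfg : ∀ y ∈ Set.Ioo a b, f y = g y) :
    ∫ y in a..b, f y = ∫ y in a..b, g y := by
  apply intervalIntegral.integral_congr_ae
  have hb : ∀ᵐ y : ℝ ∂volume, y ≠ b := by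
    refine MeasureTheory.ae_iff.2 ?_
    simpa using MeasureTheory.measure_singleton b
  filter_upwards [hb] with y hy hmem
  rw [Set.uIoc_of_le hab] at hmem
  exact hfg y ⟨hmem.1, lt_of_le_of_ne hmem.2 hy⟩

open MeasureTheory in
lemma integral_const_Ioo {f : ℝ → ℝ} {a b c : ℝ} (hab : a ≤ b)
    (hf : ∀ y ∈ Set.Ioo a b, f y = c) : ∫ y in a..b, f y = c * (b - a) := by
  rw [intervalIntegral_congr_Ioo hab hf, intervalIntegral.integral_const, smul_eq_mul]
  ring

section ints
open MeasureTheory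
variable {h : ℝ} (h0 : 0 < h) (h1 : h < 1)
include h0 h1

lemma II_bernS : ∀ a b : ℝ, IntervalIntegrable (bernS h) volume a b :=
  intervalIntegrable_of_bounded (bernS_meas h) (bernS_bound h0 h1)

lemma integral_bernS (x : ℝ) (hx : x ∈ Set.Icc (0:ℝ) 1) :
    ∫ y in (0:ℝ)..x, bernS h y = tFun h x := by
  obtain ⟨hx0, hx1⟩ := hx
  have Ia : ∫ y in (0:ℝ)..((1-h)/2), bernS h y = 0 := by
    rw [integral_const_Ioo (by linarith) (fun y hy => bernS_1 h0 h1 y hy.1.le hy.2)]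
    ring
  have Ib : ∫ y in ((1-h)/2)..(1/2:ℝ), bernS h y = h/2 := by
    rw [integral_const_Ioo (by linarith) (fun y hy => bernS_2 h0 h1 y hy.1.le hy.2)]
    ring
  have Ic : ∫ y in (1/2:ℝ)..((1+h)/2), bernS h y = -(h/2) := by
    rw [integral_const_Ioo (by linarith) (fun y hy => bernS_3 h0 h1 y hy.1.le hy.2)]
    ring
  rcases le_or_gt x ((1-h)/2) with c1 | c1
  · rw [integral_const_Ioo hx0 (fun y hy => bernS_1 h0 h1 y hy.1.le (lt_of_lt_of_le hy.2 c1))]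
    unfold tFun; split_ifs <;> linarith
  rcases le_or_gt x (1/2) with c2 | c2
  · rw [← intervalIntegral.integral_add_adjacent_intervals (II_bernS h0 h1 0 ((1-h)/2))
      (II_bernS h0 h1 ((1-h)/2) x), Ia,
      integral_const_Ioo (by linarith) (fun y hy => bernS_2 h0 h1 y hy.1.le (lt_of_lt_of_le hy.2 c2))]
    unfold tFun; split_ifs <;> linarith
  rcases le_or_gt x ((1+h)/2) with c3 | c3
  · rw [← intervalIntegral.integral_add_adjacent_intervals (II_bernS h0 h1 0 (1/2))
      (II_bernS h0 h1 (1/2) x),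
      ← intervalIntegral.integral_add_adjacent_intervals (II_bernS h0 h1 0 ((1-h)/2))
      (II_bernS h0 h1 ((1-h)/2) (1/2)), Ia, Ib,
      integral_const_Ioo (by linarith) (fun y hy => bernS_3 h0 h1 y hy.1.le (lt_of_lt_of_le hy.2 c3))]
    unfold tFun; split_ifs <;> linarith
  · rw [← intervalIntegral.integral_add_adjacent_intervals (II_bernS h0 h1 0 ((1+h)/2))
      (II_bernS h0 h1 ((1+h)/2) x),
      ← intervalIntegral.integral_add_adjacent_intervals (II_bernS h0 h1 0 (1/2))
      (II_bernS h0 h1 (1/2) ((1+h)/2)),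
      ← intervalIntegral.integral_add_adjacent_intervals (II_bernS h0 h1 0 ((1-h)/2))
      (II_bernS h0 h1 ((1-h)/2) (1/2)), Ia, Ib, Ic,
      integral_const_Ioo (by linarith) (fun y hy => bernS_4 h0 h1 y hy.1.le (lt_of_lt_of_le hy.2 hx1))]
    unfold tFun; split_ifs <;> linarith

lemma bernMt_b1 : bernMt h ((1-h)/2) = 0 := by
  unfold bernMt
  rw [bernM_lo h0 h1 _ (by linarith) (by linarith),
    show 2*((1-h)/2) + h = (1:ℝ) by ring, Int.fract_one]

lemma bernMt_half : bernMt h (1/2 : ℝ) = 1 - h := by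
  rw [bernMt_3 h0 h1 _ le_rfl (by linarith)]
  ring

lemma bernMt_b3 : bernMt h ((1+h)/2) = 0 := by
  unfold bernMt
  rw [bernM_hi h0 h1 _ (by linarith) (by linarith),
    show 2*((1+h)/2) - 1 - h = (0:ℝ) by ring, Int.fract_zero]

lemma integral_bernS_iter (k : ℕ) : ∀ x ∈ Set.Icc (0:ℝ) 1,
    ∫ y in (0:ℝ)..x, bernS h ((bernMt h)^[k] y)
      = (1/2:ℝ)^k * (tFun h ((bernMt h)^[k] x) - tFun h ((bernMt h)^[k] 0)) := by
  induction k with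
  | zero =>
    intro x hx
    simp only [Function.iterate_zero, id_eq, pow_zero, one_mul]
    rw [integral_bernS h0 h1 x hx, tFun_zero h h1]
    ring
  | succ k IH =>
    intro x hx
    obtain ⟨hx0, hx1⟩ := hx
    set f : ℝ → ℝ := fun u => bernS h ((bernMt h)^[k] u) with hfdef
    have hfm : Measurable f := (bernS_meas h).comp ((bernMt_meas h).iterate k)
    have hfb : ∀ y, |f y| ≤ 1 := fun y => bernS_bound h0 h1 _
    have IIf : ∀ a b : ℝ, IntervalIntegrable f volume a b :=
      intervalIntegrable_of_bounded hfm hfb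
    have IIM : ∀ a b : ℝ, IntervalIntegrable (fun y => f (bernMt h y)) volume a b :=
      intervalIntegrable_of_bounded (hfm.comp (bernMt_meas h)) (fun y => hfb _)
    -- value of G(u) = ∫_0^u f
    have G : ∀ u ∈ Set.Icc (0:ℝ) 1, ∫ y in (0:ℝ)..u, f y
        = (1/2:ℝ)^k * (tFun h ((bernMt h)^[k] u) - tFun h ((bernMt h)^[k] 0)) := IH
    have Gsub : ∀ a b : ℝ, a ∈ Set.Icc (0:ℝ) 1 → b ∈ Set.Icc (0:ℝ) 1 →
        ∫ y in a..b, f y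
          = (1/2:ℝ)^k * (tFun h ((bernMt h)^[k] b) - tFun h ((bernMt h)^[k] a)) := by
      intro a b ha hb
      rw [← intervalIntegral.integral_interval_sub_left (IIf 0 b) (IIf 0 a), G a ha, G b hb]
      ring
    have G1 : tFun h ((bernMt h)^[k] 1) = tFun h ((bernMt h)^[k] 0) := tFun_iter_one h0 h1 k
    have Gsym : tFun h ((bernMt h)^[k] (1-h)) = tFun h ((bernMt h)^[k] h) := tFun_iter_symm h0 h1 k
    -- piece-wise change of variables
    have P1 : ∀ a b : ℝ, 0 ≤ a → a ≤ b → b ≤ (1-h)/2 →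
        ∫ y in a..b, f (bernMt h y) = 2⁻¹ * ∫ u in (2*a+h)..(2*b+h), f u := by
      intro a b ha hab hb
      rw [intervalIntegral_congr_Ioo (f := fun y => f (bernMt h y)) (g := fun y => f (2*y+h)) hab
        (fun y hy => by show f (bernMt h y) = f (2*y+h); rw [bernMt_1 h0 h1 y (ha.trans hy.1.le) (hy.2.trans_le hb)]),
        intervalIntegral.integral_comp_mul_add f two_ne_zero h, smul_eq_mul]
    have P2 : ∀ a b : ℝ, (1-h)/2 ≤ a → a ≤ b → b ≤ 1/2 →
        ∫ y in a..b, f (bernMt h y) = 2⁻¹ * ∫ u in (2*a+(h-1))..(2*b+(h-1)), f u := by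
      intro a b ha hab hb
      rw [intervalIntegral_congr_Ioo (f := fun y => f (bernMt h y)) (g := fun y => f (2*y+(h-1))) hab
        (fun y hy => by show f (bernMt h y) = f (2*y+(h-1)); rw [bernMt_2 h0 h1 y (ha.trans hy.1.le) (hy.2.trans_le hb),
          show 2*y + h - 1 = 2*y + (h-1) by ring]),
        intervalIntegral.integral_comp_mul_add f two_ne_zero (h-1), smul_eq_mul]
    have P3 : ∀ a b : ℝ, 1/2 ≤ a → a ≤ b → b ≤ (1+h)/2 →
        ∫ y in a..b, f (bernMt h y) = 2⁻¹ * ∫ u in (2*a+(-h))..(2*b+(-h)), f u := by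
      intro a b ha hab hb
      rw [intervalIntegral_congr_Ioo (f := fun y => f (bernMt h y)) (g := fun y => f (2*y+(-h))) hab
        (fun y hy => by show f (bernMt h y) = f (2*y+(-h)); rw [bernMt_3 h0 h1 y (ha.trans hy.1.le) (hy.2.trans_le hb),
          show 2*y - h = 2*y + (-h) by ring]),
        intervalIntegral.integral_comp_mul_add f two_ne_zero (-h), smul_eq_mul]
    have P4 : ∀ a b : ℝ, (1+h)/2 ≤ a → a ≤ b → b ≤ 1 →
        ∫ y in a..b, f (bernMt h y) = 2⁻¹ * ∫ u in (2*a+(-(1+h)))..(2*b+(-(1+h))), f u := by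
      intro a b ha hab hb
      rw [intervalIntegral_congr_Ioo (f := fun y => f (bernMt h y)) (g := fun y => f (2*y+(-(1+h)))) hab
        (fun y hy => by show f (bernMt h y) = f (2*y+(-(1+h))); rw [bernMt_4 h0 h1 y (ha.trans hy.1.le) (hy.2.trans_le hb),
          show 2*y - 1 - h = 2*y + (-(1+h)) by ring]),
        intervalIntegral.integral_comp_mul_add f two_ne_zero (-(1+h)), smul_eq_mul]
    -- rewrite integrand
    have hgoal : ∫ y in (0:ℝ)..x, bernS h ((bernMt h)^[k+1] y)
        = ∫ y in (0:ℝ)..x, f (bernMt h y) := by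
      simp only [Function.iterate_succ_apply]
      rfl
    rw [hgoal]
    have hMk1x : (bernMt h)^[k+1] x = (bernMt h)^[k] (bernMt h x) := Function.iterate_succ_apply _ _ _
    have hMk10 : (bernMt h)^[k+1] 0 = (bernMt h)^[k] h := by
      rw [Function.iterate_succ_apply, bernMt_zero h0 h1]
    rw [hMk1x, hMk10, pow_succ]
    rcases le_or_gt x ((1-h)/2) with c1 | c1
    · rw [P1 0 x le_rfl hx0 c1, show 2*(0:ℝ)+h = h by ring,
        Gsub h (2*x+h) ⟨h0.le, h1.le⟩ ⟨by linarith, by linarith⟩]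
      have key : tFun h ((bernMt h)^[k] (2*x+h)) = tFun h ((bernMt h)^[k] (bernMt h x)) := by
        rcases eq_or_lt_of_le c1 with he | hlt
        · rw [he, show 2*((1-h)/2)+h = (1:ℝ) by ring, bernMt_b1 h0 h1, G1]
        · rw [bernMt_1 h0 h1 x hx0 hlt]
      rw [key]
      ring
    rcases le_or_gt x (1/2) with c2 | c2
    · rw [← intervalIntegral.integral_add_adjacent_intervals (IIM 0 ((1-h)/2)) (IIM ((1-h)/2) x),
        P1 0 ((1-h)/2) le_rfl (by linarith) le_rfl, P2 ((1-h)/2) x le_rfl (by linarith) c2,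
        show 2*(0:ℝ)+h = h by ring, show 2*((1-h)/2)+h = (1:ℝ) by ring,
        show 2*((1-h)/2)+(h-1) = (0:ℝ) by ring,
        Gsub h 1 ⟨h0.le, h1.le⟩ ⟨by linarith, le_rfl⟩,
        Gsub 0 (2*x+(h-1)) ⟨le_rfl, by linarith⟩ ⟨by linarith, by linarith⟩, G1]
      have key : tFun h ((bernMt h)^[k] (2*x+(h-1))) = tFun h ((bernMt h)^[k] (bernMt h x)) := by
        rcases eq_or_lt_of_le c2 with he | hlt
        · rw [he, show 2*(1/2:ℝ)+(h-1) = h by ring, bernMt_half h0 h1, Gsym]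
        · rw [bernMt_2 h0 h1 x c1.le hlt, show 2*x+h-1 = 2*x+(h-1) by ring]
      rw [key]
      ring
    rcases le_or_gt x ((1+h)/2) with c3 | c3
    · rw [← intervalIntegral.integral_add_adjacent_intervals (IIM 0 (1/2)) (IIM (1/2) x),
        ← intervalIntegral.integral_add_adjacent_intervals (IIM 0 ((1-h)/2)) (IIM ((1-h)/2) (1/2)),
        P1 0 ((1-h)/2) le_rfl (by linarith) le_rfl, P2 ((1-h)/2) (1/2) le_rfl (by linarith) le_rfl,
        P3 (1/2) x le_rfl (by linarith) c3,
        show 2*(0:ℝ)+h = h by ring, show 2*((1-h)/2)+h = (1:ℝ) by ring,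
        show 2*((1-h)/2)+(h-1) = (0:ℝ) by ring, show 2*(1/2:ℝ)+(h-1) = h by ring,
        show 2*(1/2:ℝ)+(-h) = 1-h by ring,
        Gsub h 1 ⟨h0.le, h1.le⟩ ⟨by linarith, le_rfl⟩,
        Gsub 0 h ⟨le_rfl, by linarith⟩ ⟨h0.le, h1.le⟩,
        Gsub (1-h) (2*x+(-h)) ⟨by linarith, by linarith⟩ ⟨by linarith, by linarith⟩, G1, Gsym]
      have key : tFun h ((bernMt h)^[k] (2*x+(-h))) = tFun h ((bernMt h)^[k] (bernMt h x)) := by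
        rcases eq_or_lt_of_le c3 with he | hlt
        · rw [he, show 2*((1+h)/2)+(-h) = (1:ℝ) by ring, bernMt_b3 h0 h1, G1]
        · rw [bernMt_3 h0 h1 x c2.le hlt, show 2*x-h = 2*x+(-h) by ring]
      rw [key]
      ring
    · rw [← intervalIntegral.integral_add_adjacent_intervals (IIM 0 ((1+h)/2)) (IIM ((1+h)/2) x),
        ← intervalIntegral.integral_add_adjacent_intervals (IIM 0 (1/2)) (IIM (1/2) ((1+h)/2)),
        ← intervalIntegral.integral_add_adjacent_intervals (IIM 0 ((1-h)/2)) (IIM ((1-h)/2) (1/2)),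
        P1 0 ((1-h)/2) le_rfl (by linarith) le_rfl, P2 ((1-h)/2) (1/2) le_rfl (by linarith) le_rfl,
        P3 (1/2) ((1+h)/2) le_rfl (by linarith) le_rfl, P4 ((1+h)/2) x le_rfl (by linarith) hx1,
        show 2*(0:ℝ)+h = h by ring, show 2*((1-h)/2)+h = (1:ℝ) by ring,
        show 2*((1-h)/2)+(h-1) = (0:ℝ) by ring, show 2*(1/2:ℝ)+(h-1) = h by ring,
        show 2*(1/2:ℝ)+(-h) = 1-h by ring, show 2*((1+h)/2)+(-h) = (1:ℝ) by ring,
        show 2*((1+h)/2)+(-(1+h)) = (0:ℝ) by ring,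
        Gsub h 1 ⟨h0.le, h1.le⟩ ⟨by linarith, le_rfl⟩,
        Gsub 0 h ⟨le_rfl, by linarith⟩ ⟨h0.le, h1.le⟩,
        Gsub (1-h) 1 ⟨by linarith, by linarith⟩ ⟨by linarith, le_rfl⟩,
        Gsub 0 (2*x+(-(1+h))) ⟨le_rfl, by linarith⟩ ⟨by linarith, by linarith⟩, G1, Gsym]
      have key : tFun h ((bernMt h)^[k] (2*x+(-(1+h)))) = tFun h ((bernMt h)^[k] (bernMt h x)) := by
        rcases eq_or_lt_of_le hx1 with he | hlt
        · rw [he, show 2*(1:ℝ)+(-(1+h)) = 1-h by ring, bernMt_one h0 h1, Gsym]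
        · rw [bernMt_4 h0 h1 x c3.le hlt, show 2*x-1-h = 2*x+(-(1+h)) by ring]
      rw [key]
      ring

end ints

theorem stmt18 (h : ℝ) (hh : h ∈ Set.Ioo (0:ℝ) 1) (x : ℝ) (hx : x ∈ Set.Icc (0:ℝ) 1) :
    Summable (fun k : ℕ =>
      |(1/2:ℝ)^k * (tFun h ((bernMt h)^[k] x) - (1/2) * tFun h ((bernMt h)^[k] h))|) ∧
    Tendsto (fun n : ℕ => bernTak h n x) atTop
      (nhds (∑' k : ℕ,
        (1/2:ℝ)^k * (tFun h ((bernMt h)^[k] x) - (1/2) * tFun h ((bernMt h)^[k] h)))) := by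
  obtain ⟨h0, h1⟩ := hh
  set a : ℕ → ℝ := fun k =>
    (1/2:ℝ)^k * (tFun h ((bernMt h)^[k] x) - (1/2) * tFun h ((bernMt h)^[k] h)) with ha
  have habs : ∀ k, |a k| ≤ (1/2:ℝ)^k := by
    intro k
    rw [ha]
    simp only
    rw [abs_mul, abs_pow, abs_of_nonneg (by norm_num : (0:ℝ) ≤ 1/2)]
    have t1 := tFun_nonneg h ((bernMt h)^[k] x) h0
    have t2 := tFun_le h ((bernMt h)^[k] x) h0
    have t3 := tFun_nonneg h ((bernMt h)^[k] h) h0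
    have t4 := tFun_le h ((bernMt h)^[k] h) h0
    have : |tFun h ((bernMt h)^[k] x) - 1/2 * tFun h ((bernMt h)^[k] h)| ≤ 1 := by
      rw [abs_le]; constructor <;> nlinarith
    nlinarith [pow_nonneg (by norm_num : (0:ℝ) ≤ 1/2) k,
      abs_nonneg (tFun h ((bernMt h)^[k] x) - 1/2 * tFun h ((bernMt h)^[k] h))]
  have hsumabs : Summable (fun k => |a k|) := by
    apply Summable.of_nonneg_of_le (fun k => abs_nonneg _) habs
    exact summable_geometric_of_lt_one (by norm_num) (by norm_num)
  refine ⟨hsumabs, ?_⟩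
  have hsum : Summable a := Summable.of_abs hsumabs
  -- closed form for bernTak
  have Tak : ∀ n : ℕ, bernTak h n x =
      (∑ k ∈ Finset.range (n+1), (1/2:ℝ)^k * tFun h ((bernMt h)^[k] x))
        - (1/2) * ∑ k ∈ Finset.range n, (1/2:ℝ)^k * tFun h ((bernMt h)^[k] h) := by
    intro n
    unfold bernTak
    have hInt : ∀ k ∈ Finset.range (n+1),
        IntervalIntegrable (fun y => bernS h ((bernMt h)^[k] y)) MeasureTheory.volume 0 x :=
      fun k _ => intervalIntegrable_of_bounded
        ((bernS_meas h).comp ((bernMt_meas h).iterate k))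
        (fun y => bernS_bound h0 h1 _) 0 x
    calc ∫ y in (0:ℝ)..x, ((⌊(bernM h)^[n+1] y⌋ : ℝ) - (⌊y⌋ : ℝ))
        = ∫ y in (0:ℝ)..x, ∑ k ∈ Finset.range (n+1), bernS h ((bernMt h)^[k] y) := by
          apply intervalIntegral.integral_congr
          intro y _
          exact sum_bernS h n y
      _ = ∑ k ∈ Finset.range (n+1), ∫ y in (0:ℝ)..x, bernS h ((bernMt h)^[k] y) :=
          intervalIntegral.integral_finset_sum hInt
      _ = ∑ k ∈ Finset.range (n+1),
            (1/2:ℝ)^k * (tFun h ((bernMt h)^[k] x) - tFun h ((bernMt h)^[k] 0)) :=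
          Finset.sum_congr rfl (fun k _ => integral_bernS_iter h0 h1 k x hx)
      _ = (∑ k ∈ Finset.range (n+1), (1/2:ℝ)^k * tFun h ((bernMt h)^[k] x))
            - ∑ k ∈ Finset.range (n+1), (1/2:ℝ)^k * tFun h ((bernMt h)^[k] 0) := by
          rw [← Finset.sum_sub_distrib]
          exact Finset.sum_congr rfl (fun k _ => by ring)
      _ = (∑ k ∈ Finset.range (n+1), (1/2:ℝ)^k * tFun h ((bernMt h)^[k] x))
            - (1/2) * ∑ k ∈ Finset.range n, (1/2:ℝ)^k * tFun h ((bernMt h)^[k] h) := by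
          congr 1
          rw [Finset.sum_range_succ' (fun k => (1/2:ℝ)^k * tFun h ((bernMt h)^[k] 0)) n]
          simp only [Function.iterate_zero, id_eq, pow_zero, one_mul, tFun_zero h h1, mul_zero,
            add_zero]
          rw [Finset.mul_sum]
          apply Finset.sum_congr rfl
          intro k _
          rw [Function.iterate_succ_apply, bernMt_zero h0 h1, pow_succ]
          ring
  have key : ∀ n : ℕ, bernTak h n x =
      (∑ k ∈ Finset.range (n+1), a k) + (1/2) * (1/2:ℝ)^n * tFun h ((bernMt h)^[n] h) := by
    intro n
    rw [Tak n]
    have e1 : ∑ k ∈ Finset.range (n+1), a k =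
        (∑ k ∈ Finset.range (n+1), (1/2:ℝ)^k * tFun h ((bernMt h)^[k] x))
          - (1/2) * ∑ k ∈ Finset.range (n+1), (1/2:ℝ)^k * tFun h ((bernMt h)^[k] h) := by
      rw [Finset.mul_sum, ← Finset.sum_sub_distrib]
      exact Finset.sum_congr rfl (fun k _ => by rw [ha]; ring)
    rw [e1, Finset.sum_range_succ (fun k => (1/2:ℝ)^k * tFun h ((bernMt h)^[k] h)) n]
    ring
  have T1 : Tendsto (fun n : ℕ => ∑ k ∈ Finset.range (n+1), a k) atTop (nhds (∑' k, a k)) :=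
    hsum.hasSum.tendsto_sum_nat.comp (tendsto_add_atTop_nat 1)
  have T2 : Tendsto (fun n : ℕ => (1/2) * (1/2:ℝ)^n * tFun h ((bernMt h)^[n] h)) atTop
      (nhds 0) := by
    apply squeeze_zero (g := fun n => (1/2:ℝ)^n)
    · intro n
      have := tFun_nonneg h ((bernMt h)^[n] h) h0
      positivity
    · intro n
      have t2 := tFun_le h ((bernMt h)^[n] h) h0
      have t1 := tFun_nonneg h ((bernMt h)^[n] h) h0
      nlinarith [pow_nonneg (by norm_num : (0:ℝ) ≤ 1/2) n, pow_le_one₀ (by norm_num : (0:ℝ) ≤ 1/2) (by norm_num : (1/2:ℝ) ≤ 1) (n := n)]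
    · exact tendsto_pow_atTop_nhds_zero_of_lt_one (by norm_num) (by norm_num)
  have := T1.add T2
  rw [add_zero] at this
  exact Tendsto.congr (fun n => (key n).symm) this
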